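/- arXiv:2007.12434 — 2 statements merged into one kernel-verified Lean document; each statement's English description precedes it below -/
import Mathlib

section
/- If G is a tree with at least two vertices, then q(G) = max_{uv ∈ E(G)} min{d(u)/(d(u)+1), d(v)/(d(v)+1)}. -/
open SimpleGraph Set
open scoped Classical

/-- The degree ratio of a vertex `v` with respect to the partition `(s, sᶜ)`:
the size of its closed neighborhood inside its own side divided by the size of
its closed neighborhood in `G`. -/
noncomputable def vertexRatio {V : Type*} (G : SimpleGraph V) (s : Set V) (v : V) : ℝ :=
  (((G.neighborSet v ∩ (if v ∈ s then s else sᶜ)).ncard : ℝ) + 1) /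
    (((G.neighborSet v).ncard : ℝ) + 1)

/-- The worst (minimum) degree ratio over all vertices, for the partition `(s, sᶜ)`. -/
noncomputable def minRatio {V : Type*} (G : SimpleGraph V) (s : Set V) : ℝ :=
  sInf (Set.range (vertexRatio G s))

/-- The optimal degree ratio `q(G)`: the maximum over all nontrivial partitions
of the worst degree ratio. -/
noncomputable def degreeRatio {V : Type*} (G : SimpleGraph V) : ℝ :=
  sSup { r : ℝ | ∃ s : Set V, s.Nonempty ∧ sᶜ.Nonempty ∧ r = minRatio G s }

section Aux
set_option linter.unusedSectionVars false
variable {V : Type*} [Fintype V] {G : SimpleGraph V}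

lemma vertexRatio_le_one (G : SimpleGraph V) (s : Set V) (v : V) :
    vertexRatio G s v ≤ 1 := by
  unfold vertexRatio
  rw [div_le_one (by positivity)]
  have h : ((G.neighborSet v ∩ (if v ∈ s then s else sᶜ)).ncard : ℝ) ≤
      ((G.neighborSet v).ncard : ℝ) := by
    exact_mod_cast Set.ncard_le_ncard Set.inter_subset_left (Set.toFinite _)
  linarith

lemma cross_bound {t : Set V} {u v : V} (h : G.Adj u v) (hv : v ∉ t) :
    (((G.neighborSet u ∩ t).ncard : ℝ) + 1) / (((G.neighborSet u).ncard : ℝ) + 1)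
      ≤ ((G.neighborSet u).ncard : ℝ) / (((G.neighborSet u).ncard : ℝ) + 1) := by
  have hsub : G.neighborSet u ∩ t ⊆ G.neighborSet u \ {v} := by
    rintro x ⟨hx1, hx2⟩
    exact ⟨hx1, fun hxv => hv (by rwa [Set.mem_singleton_iff.mp hxv] at hx2)⟩
  have hvmem : v ∈ G.neighborSet u := h
  have h1 : (G.neighborSet u ∩ t).ncard + 1 ≤ (G.neighborSet u).ncard := by
    have h2 := Set.ncard_le_ncard hsub (Set.toFinite _)
    rw [Set.ncard_diff_singleton_of_mem hvmem] at h2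
    have h3 : 0 < (G.neighborSet u).ncard :=
      (Set.ncard_pos (Set.toFinite _)).mpr ⟨v, hvmem⟩
    omega
  gcongr
  exact_mod_cast h1

lemma vertexRatio_cross_left {s : Set V} {u v : V} (h : G.Adj u v) (hu : u ∈ s) (hv : v ∉ s) :
    vertexRatio G s u ≤ ((G.neighborSet u).ncard : ℝ) / (((G.neighborSet u).ncard : ℝ) + 1) := by
  unfold vertexRatio
  rw [if_pos hu]
  exact cross_bound h hv

lemma vertexRatio_cross_right {s : Set V} {u v : V} (h : G.Adj u v) (hu : u ∈ s) (hv : v ∉ s) :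
    vertexRatio G s v ≤ ((G.neighborSet v).ncard : ℝ) / (((G.neighborSet v).ncard : ℝ) + 1) := by
  unfold vertexRatio
  rw [if_neg hv]
  exact cross_bound h.symm (fun h' => h' hu)

lemma minRatio_le (G : SimpleGraph V) (s : Set V) (w : V) :
    minRatio G s ≤ vertexRatio G s w :=
  csInf_le (Set.Finite.bddBelow (Set.finite_range _)) ⟨w, rfl⟩

lemma walk_cross {s : Set V} : ∀ {a b : V}, G.Walk a b → a ∈ s → b ∉ s →
    ∃ u v, G.Adj u v ∧ u ∈ s ∧ v ∉ s := by
  intro a b p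
  induction p with
  | nil => intro ha hb; exact absurd ha hb
  | @cons x y z hxy p ih =>
    intro ha hb
    by_cases hy : y ∈ s
    · exact ih hy hb
    · exact ⟨x, y, hxy, ha, hy⟩

lemma tree_edge_partition (hT : G.IsTree) {u v : V} (h : G.Adj u v) :
    ∃ s : Set V, s.Nonempty ∧ sᶜ.Nonempty ∧ minRatio G s =
      min (((G.neighborSet u).ncard : ℝ) / (((G.neighborSet u).ncard : ℝ) + 1))
          (((G.neighborSet v).ncard : ℝ) / (((G.neighborSet v).ncard : ℝ) + 1)) := by
  set s : Set V := {w | (G \ fromEdgeSet {s(u, v)}).Reachable u w} with hs_def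
  have hu : u ∈ s := Reachable.refl u
  have hv : v ∉ s := by
    have hb := isAcyclic_iff_forall_adj_isBridge.mp hT.2 h
    exact fun hr => isBridge_iff.mp hb hr
  have hstep : ∀ {w x : V}, w ∈ s → G.Adj w x → s(w, x) ≠ s(u, v) → x ∈ s := by
    intro w x hw hwx hne
    have hadj : (G \ fromEdgeSet {s(u, v)}).Adj w x := by
      rw [sdiff_adj]
      refine ⟨hwx, ?_⟩
      rw [fromEdgeSet_adj]
      rintro ⟨hmem, -⟩
      exact hne (by simpa using hmem)
    exact hw.trans hadj.reachable
  have hNu : G.neighborSet u ∩ s = G.neighborSet u \ {v} := by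
    ext x
    constructor
    · rintro ⟨hx1, hx2⟩
      exact ⟨hx1, fun hxv => hv (by rwa [Set.mem_singleton_iff.mp hxv] at hx2)⟩
    · rintro ⟨hx1, hx2⟩
      refine ⟨hx1, hstep hu hx1 ?_⟩
      intro heq
      rcases Sym2.eq_iff.mp heq with ⟨-, rfl⟩ | ⟨huv', -⟩
      · exact hx2 rfl
      · exact h.ne huv'
  have hNv : G.neighborSet v ∩ sᶜ = G.neighborSet v \ {u} := by
    ext x
    constructor
    · rintro ⟨hx1, hx2⟩
      exact ⟨hx1, fun hxu => hx2 (by rwa [Set.mem_singleton_iff.mp hxu])⟩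
    · rintro ⟨hx1, hx2⟩
      refine ⟨hx1, fun hxs => hv (hstep hxs ((G.mem_neighborSet v x).mp hx1).symm ?_)⟩
      intro heq
      rcases Sym2.eq_iff.mp heq with ⟨rfl, -⟩ | ⟨rfl, rfl⟩
      · exact hx2 rfl
      · exact h.ne rfl
  have dupos : 0 < (G.neighborSet u).ncard := (Set.ncard_pos (Set.toFinite _)).mpr ⟨v, h⟩
  have dvpos : 0 < (G.neighborSet v).ncard := (Set.ncard_pos (Set.toFinite _)).mpr ⟨u, h.symm⟩
  have hVu : vertexRatio G s u =
      ((G.neighborSet u).ncard : ℝ) / (((G.neighborSet u).ncard : ℝ) + 1) := by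
    unfold vertexRatio
    rw [if_pos hu, hNu,
      Set.ncard_diff_singleton_of_mem ((G.mem_neighborSet u v).mpr h)]
    rw [Nat.cast_sub dupos]
    push_cast
    ring_nf
  have hVv : vertexRatio G s v =
      ((G.neighborSet v).ncard : ℝ) / (((G.neighborSet v).ncard : ℝ) + 1) := by
    unfold vertexRatio
    rw [if_neg hv, hNv,
      Set.ncard_diff_singleton_of_mem ((G.mem_neighborSet v u).mpr h.symm)]
    rw [Nat.cast_sub dvpos]
    push_cast
    ring_nf
  have hother : ∀ w, w ≠ u → w ≠ v → vertexRatio G s w = 1 := by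
    intro w hwu hwv
    unfold vertexRatio
    by_cases hw : w ∈ s
    · have hfull : G.neighborSet w ∩ s = G.neighborSet w := by
        refine Set.inter_eq_left.mpr fun x hx => hstep hw hx ?_
        intro heq
        rcases Sym2.eq_iff.mp heq with ⟨hwu', -⟩ | ⟨hwv', -⟩
        · exact hwu hwu'
        · exact hwv hwv'
      rw [if_pos hw, hfull, div_self (by positivity)]
    · have hfull : G.neighborSet w ∩ sᶜ = G.neighborSet w := by
        refine Set.inter_eq_left.mpr
          fun x hx hxs => hw (hstep hxs ((G.mem_neighborSet w x).mp hx).symm ?_)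
        intro heq
        rcases Sym2.eq_iff.mp heq with ⟨-, hwv'⟩ | ⟨-, hwu'⟩
        · exact hwv hwv'
        · exact hwu hwu'
      rw [if_neg hw, hfull, div_self (by positivity)]
  refine ⟨s, ⟨u, hu⟩, ⟨v, hv⟩, le_antisymm ?_ ?_⟩
  · exact le_min (hVu ▸ minRatio_le G s u) (hVv ▸ minRatio_le G s v)
  · refine le_csInf ⟨vertexRatio G s u, ⟨u, rfl⟩⟩ ?_
    rintro r ⟨w, rfl⟩
    by_cases hwu : w = u
    · subst hwu; rw [hVu]; exact min_le_left _ _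
    by_cases hwv : w = v
    · subst hwv; rw [hVv]; exact min_le_right _ _
    rw [hother w hwu hwv]
    refine (min_le_left _ _).trans ?_
    rw [div_le_one (by positivity)]
    linarith

end Aux

theorem stmt_1 {V : Type*} [Fintype V] (G : SimpleGraph V) (hG : G.IsTree)
    (hV : Nontrivial V) :
    (∃ u v, G.Adj u v ∧ degreeRatio G =
        min (((G.neighborSet u).ncard : ℝ) / (((G.neighborSet u).ncard : ℝ) + 1))
            (((G.neighborSet v).ncard : ℝ) / (((G.neighborSet v).ncard : ℝ) + 1))) ∧
    (∀ u v, G.Adj u v →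
        min (((G.neighborSet u).ncard : ℝ) / (((G.neighborSet u).ncard : ℝ) + 1))
            (((G.neighborSet v).ncard : ℝ) / (((G.neighborSet v).ncard : ℝ) + 1))
          ≤ degreeRatio G) := by
  have hVne : Nonempty V := hV.to_nonempty
  obtain ⟨w₀⟩ := hVne
  set S := { r : ℝ | ∃ s : Set V, s.Nonempty ∧ sᶜ.Nonempty ∧ r = minRatio G s } with hS_def
  have hSbdd : BddAbove S := by
    refine ⟨1, ?_⟩
    rintro r ⟨s, -, -, rfl⟩
    exact (minRatio_le G s w₀).trans (vertexRatio_le_one G s w₀)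
  have hSfin : S.Finite := by
    apply (Set.finite_range (minRatio G)).subset
    rintro r ⟨s, -, -, rfl⟩
    exact ⟨s, rfl⟩
  -- Part 2
  have part2 : ∀ u v, G.Adj u v →
      min (((G.neighborSet u).ncard : ℝ) / (((G.neighborSet u).ncard : ℝ) + 1))
          (((G.neighborSet v).ncard : ℝ) / (((G.neighborSet v).ncard : ℝ) + 1))
        ≤ degreeRatio G := by
    intro u v huv
    obtain ⟨s, hs1, hs2, hs3⟩ := tree_edge_partition hG huv
    have := le_csSup hSbdd (show minRatio G s ∈ S from ⟨s, hs1, hs2, rfl⟩)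
    rwa [hs3] at this
  refine ⟨?_, part2⟩
  -- S is nonempty: there is an edge
  obtain ⟨a, b, hab⟩ := hV
  obtain ⟨p⟩ := hG.1 a b
  obtain ⟨u₁, v₁, he, -, -⟩ :=
    walk_cross (s := ({a} : Set V)) p rfl (fun hb => hab (Set.mem_singleton_iff.mp hb).symm)
  have hSne : S.Nonempty := by
    obtain ⟨s, hs1, hs2, hs3⟩ := tree_edge_partition hG he
    exact ⟨minRatio G s, s, hs1, hs2, rfl⟩
  have hmem : degreeRatio G ∈ S := hSne.csSup_mem hSfin
  obtain ⟨s₀, h1, h2, heq⟩ := hmem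
  obtain ⟨a₀, ha₀⟩ := h1
  obtain ⟨b₀, hb₀⟩ := h2
  obtain ⟨p₀⟩ := hG.1 a₀ b₀
  obtain ⟨u, v, huv, hus, hvs⟩ := walk_cross p₀ ha₀ hb₀
  refine ⟨u, v, huv, le_antisymm ?_ (part2 u v huv)⟩
  rw [heq]
  exact le_min ((minRatio_le G s₀ u).trans (vertexRatio_cross_left huv hus hvs))
    ((minRatio_le G s₀ v).trans (vertexRatio_cross_right huv hus hvs))
end

section
/- If G is a connected graph with at least two vertices, then q(G) < 1. -/
open SimpleGraph Set
open scoped Classical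

lemma cross_edge {V : Type*} {G : SimpleGraph V} {s : Set V} :
    ∀ {a b : V}, G.Walk a b → a ∈ s → b ∉ s →
      ∃ x y, x ∈ s ∧ y ∉ s ∧ G.Adj x y
  | _, _, SimpleGraph.Walk.nil, ha, hb => absurd ha hb
  | _, _, SimpleGraph.Walk.cons (v := v) h p, ha, hb => by
      by_cases hv : v ∈ s
      · exact cross_edge p hv hb
      · exact ⟨_, v, ha, hv, h⟩

theorem stmt_3 {V : Type*} [Fintype V] (G : SimpleGraph V) (hV : Nontrivial V)
    (hG : G.Connected) :
    degreeRatio G < 1 := by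
  set S := { r : ℝ | ∃ s : Set V, s.Nonempty ∧ sᶜ.Nonempty ∧ r = minRatio G s } with hSdef
  have hfin : S.Finite := by
    apply (Set.finite_range (minRatio G)).subset
    rintro r ⟨s, -, -, rfl⟩
    exact Set.mem_range_self s
  obtain ⟨a, b, hab⟩ := hV
  have hne : S.Nonempty := by
    refine ⟨minRatio G {a}, {a}, ⟨a, rfl⟩, ⟨b, ?_⟩, rfl⟩
    simp [hab.symm]
  have hmem : sSup S ∈ S := hne.csSup_mem hfin
  rw [degreeRatio, ← hSdef]
  obtain ⟨s, hs1, hs2, heq⟩ := hmem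
  rw [heq]
  obtain ⟨u, hu⟩ := hs1
  obtain ⟨w, hw⟩ := hs2
  obtain ⟨wk⟩ := hG.preconnected u w
  obtain ⟨x, y, hx, hy, hadj⟩ := cross_edge wk hu hw
  have hlt : vertexRatio G s x < 1 := by
    rw [vertexRatio, if_pos hx]
    rw [div_lt_one (by positivity)]
    have hss : (G.neighborSet x ∩ s) ⊂ G.neighborSet x := by
      refine ⟨Set.inter_subset_left, fun hsub => ?_⟩
      exact hy (hsub (G.mem_neighborSet x y |>.mpr hadj) |>.2)
    have := Set.ncard_lt_ncard hss (Set.toFinite _)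
    exact add_lt_add_left (Nat.cast_lt.mpr this) 1
  calc minRatio G s ≤ vertexRatio G s x := by
        exact csInf_le (Set.finite_range _).bddBelow (Set.mem_range_self x)
    _ < 1 := hlt
end
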